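/- For every y₀ ∈ (0, F₁(1)), the integral equation y_t = y₀ + ∫₀^t (G ∘ F₁⁻¹)(y_s) ds + γθ^β w_t, t ∈ ℝ₊, admits a unique continuous solution y : ℝ₊ → (0, F₁(1)); in particular the solution never reaches 0 or F₁(1) in finite time. -/

import Mathlib

/- Fix α ∈ (0,1], β ∈ (1-α,1), θ > 0, μ ∈ (0,1), γ ∈ ℝ.
F₁(y) = ∫₀^y [v(1-v)]^{-β} dv is a strictly increasing bijection from [0,1]
onto [0,F₁(1)] with inverse F₁⁻¹ (realized via `Function.invFunOn`), and
G(y) := θ(μ-y)[y(1-y)]^{-β}. Let w : ℝ₊ → ℝ be α-Hölder continuous on every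
compact interval with w₀ = 0.
STATEMENT 9: For every y₀ ∈ (0, F₁(1)), the integral equation
y_t = y₀ + ∫₀^t (G ∘ F₁⁻¹)(y_s) ds + γθ^β w_t, t ∈ ℝ₊, admits a unique
continuous solution y : ℝ₊ → (0, F₁(1)); in particular the solution never
reaches 0 or F₁(1) in finite time. -/

noncomputable def F1 (β y : ℝ) : ℝ := ∫ v in (0:ℝ)..y, (v * (1 - v)) ^ (-β)

noncomputable def F1inv (β z : ℝ) : ℝ := Function.invFunOn (F1 β) (Set.Icc 0 1) z

noncomputable def G (β θ μ x : ℝ) : ℝ := θ * (μ - x) * (x * (1 - x)) ^ (-β)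


open MeasureTheory intervalIntegral Set Function

section F1sec
variable {β : ℝ} (hβ0 : 0 < β) (hβ1 : β < 1)
include hβ0 hβ1

omit hβ0 hβ1 in
lemma ae_notmem01 : ∀ᵐ v : ℝ, v ∉ ({0, 1} : Set ℝ) := by
  have h : volume ({0, 1} : Set ℝ) = 0 := by
    rw [show ({0, 1} : Set ℝ) = {0} ∪ {1} from rfl]
    exact measure_union_null Real.volume_singleton Real.volume_singleton
  have := measure_mono_null (s := {v : ℝ | ¬ v ∉ ({0,1}:Set ℝ)}) (by intro v hv; simp only [mem_setOf_eq, not_not] at hv; rcases hv with h|h <;> simp [h]) h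
  exact (ae_iff (p := fun v : ℝ => v ∉ ({0,1} : Set ℝ))).2 this

lemma f_one_le {v : ℝ} (hv : v ∈ Ioo (0:ℝ) 1) : (1:ℝ) ≤ (v * (1 - v)) ^ (-β) := by
  have hpos : 0 < v * (1 - v) := mul_pos hv.1 (by linarith [hv.2])
  have hle : v * (1 - v) ≤ 1 := by nlinarith [hv.1.le, hv.2.le]
  have := Real.rpow_le_rpow_of_nonpos hpos hle (by linarith : -β ≤ 0)
  simpa using this

lemma integrable01 : IntegrableOn (fun v : ℝ => (v * (1 - v)) ^ (-β)) (Icc 0 1) volume := by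
  have h1 : IntervalIntegrable (fun v : ℝ => v ^ (-β)) volume 0 1 :=
    intervalIntegrable_rpow' (by linarith)
  have h2 : IntervalIntegrable (fun v : ℝ => (1 - v) ^ (-β)) volume 0 1 := by
    have := (intervalIntegrable_rpow' (r := -β) (by linarith) (a := 0) (b := 1)).comp_sub_left 1
    simpa using this.symm
  have hg : IntegrableOn (fun v : ℝ => (2:ℝ)^β * (v ^ (-β) + (1 - v) ^ (-β))) (Icc 0 1) volume := by
    have := ((h1.add h2).const_mul ((2:ℝ)^β))
    exact (intervalIntegrable_iff_integrableOn_Icc_of_le zero_le_one).1 this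
  have hIoo : IntegrableOn (fun v : ℝ => (v * (1 - v)) ^ (-β)) (Ioo 0 1) volume := by
    refine Integrable.mono' (hg.mono_set Ioo_subset_Icc_self)
      ((by fun_prop : Measurable fun v : ℝ => (v * (1 - v)) ^ (-β)).aestronglyMeasurable) ?_
    filter_upwards [ae_restrict_mem measurableSet_Ioo] with v hv
    have hv0 : 0 < v := hv.1
    have hv1 : v < 1 := hv.2
    have h1v : 0 < 1 - v := by linarith
    have hsplit : (v * (1 - v)) ^ (-β) = v ^ (-β) * (1 - v) ^ (-β) :=
      Real.mul_rpow hv0.le h1v.le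
    have hnn : 0 ≤ (v * (1 - v)) ^ (-β) := Real.rpow_nonneg (by positivity) _
    rw [Real.norm_eq_abs, abs_of_nonneg hnn, hsplit]
    have h2b : (0:ℝ) < 2 ^ β := Real.rpow_pos_of_pos two_pos _
    rcases le_or_gt v (1/2) with hhalf | hhalf
    · have : (1 - v) ^ (-β) ≤ (2:ℝ) ^ β := by
        have := Real.rpow_le_rpow_of_nonpos (by norm_num : (0:ℝ) < 1/2)
          (by linarith : (1:ℝ)/2 ≤ 1 - v) (by linarith : -β ≤ 0)
        calc (1 - v) ^ (-β) ≤ ((1:ℝ)/2) ^ (-β) := this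
          _ = (2:ℝ) ^ β := by
            rw [one_div, ← Real.rpow_neg_one, ← Real.rpow_mul (by norm_num : (0:ℝ) ≤ 2)]
            norm_num
      have hv' : 0 ≤ v ^ (-β) := Real.rpow_nonneg hv0.le _
      have h1v' : 0 ≤ (1 - v) ^ (-β) := Real.rpow_nonneg h1v.le _
      nlinarith [mul_le_mul_of_nonneg_left this hv']
    · have : v ^ (-β) ≤ (2:ℝ) ^ β := by
        have := Real.rpow_le_rpow_of_nonpos (by norm_num : (0:ℝ) < 1/2)
          (by linarith : (1:ℝ)/2 ≤ v) (by linarith : -β ≤ 0)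
        calc v ^ (-β) ≤ ((1:ℝ)/2) ^ (-β) := this
          _ = (2:ℝ) ^ β := by
            rw [one_div, ← Real.rpow_neg_one]
            rw [← Real.rpow_mul (by norm_num : (0:ℝ) ≤ 2)]
            norm_num
      have hv' : 0 ≤ v ^ (-β) := Real.rpow_nonneg hv0.le _
      have h1v' : 0 ≤ (1 - v) ^ (-β) := Real.rpow_nonneg h1v.le _
      nlinarith [mul_le_mul_of_nonneg_right this h1v']
  exact hIoo.congr_set_ae Ioo_ae_eq_Icc.symm

lemma F1_intInt {x y : ℝ} (hx : x ∈ Icc (0:ℝ) 1) (hy : y ∈ Icc (0:ℝ) 1) :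
    IntervalIntegrable (fun v : ℝ => (v * (1 - v)) ^ (-β)) volume x y := by
  refine ((integrable01 hβ0 hβ1).mono_set ?_).intervalIntegrable
  rw [← uIcc_of_le (zero_le_one : (0:ℝ) ≤ 1)]
  exact uIcc_subset_uIcc (by simpa [uIcc_of_le] using hx) (by simpa [uIcc_of_le] using hy)

lemma F1_sub {x y : ℝ} (hx : x ∈ Icc (0:ℝ) 1) (hy : y ∈ Icc (0:ℝ) 1) :
    F1 β y - F1 β x = ∫ v in x..y, (v * (1 - v)) ^ (-β) := by
  have := integral_add_adjacent_intervals (F1_intInt hβ0 hβ1 (left_mem_Icc.2 zero_le_one) hx)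
    (F1_intInt hβ0 hβ1 hx hy)
  simp only [F1]
  linarith [this]

lemma F1_ge_sub {x y : ℝ} (hx : x ∈ Icc (0:ℝ) 1) (hy : y ∈ Icc (0:ℝ) 1) (hxy : x ≤ y) :
    y - x ≤ F1 β y - F1 β x := by
  rw [F1_sub hβ0 hβ1 hx hy]
  have h1 : ∫ v in x..y, (1:ℝ) ≤ ∫ v in x..y, (v * (1 - v)) ^ (-β) := by
    refine integral_mono_ae_restrict hxy intervalIntegrable_const (F1_intInt hβ0 hβ1 hx hy) ?_
    filter_upwards [ae_restrict_mem measurableSet_Icc,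
      ae_restrict_of_ae ae_notmem01] with v hv hv01
    have hv0 : 0 < v := lt_of_le_of_ne (hx.1.trans hv.1) (by intro h; exact hv01 (by simp [← h]))
    have hv1 : v < 1 := lt_of_le_of_ne (hv.2.trans hy.2) (by intro h; exact hv01 (by simp [h]))
    exact f_one_le hβ0 hβ1 ⟨hv0, hv1⟩
  simpa using h1

lemma F1_strictMonoOn : StrictMonoOn (F1 β) (Icc 0 1) := by
  intro x hx y hy hxy
  have h := F1_ge_sub hβ0 hβ1 hx hy hxy.le
  linarith

omit hβ0 hβ1 in
lemma F1_zero : F1 β 0 = 0 := integral_same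

lemma F1_one_pos : 0 < F1 β 1 := by
  have := F1_ge_sub hβ0 hβ1 (left_mem_Icc.2 zero_le_one) (right_mem_Icc.2 zero_le_one) zero_le_one
  rw [F1_zero] at this; linarith

lemma F1_contOn : ContinuousOn (F1 β) (Icc 0 1) := by
  have := continuousOn_primitive_interval (a := 0) (b := 1) (μ := volume)
    (f := fun v : ℝ => (v * (1 - v)) ^ (-β)) (by
      rw [uIcc_of_le zero_le_one]; exact integrable01 hβ0 hβ1)
  rw [uIcc_of_le (zero_le_one : (0:ℝ) ≤ 1)] at this; exact this

lemma F1_surjOn {z : ℝ} (hz : z ∈ Icc 0 (F1 β 1)) : ∃ x ∈ Icc (0:ℝ) 1, F1 β x = z := by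
  have h := intermediate_value_Icc (zero_le_one : (0:ℝ) ≤ 1) (F1_contOn hβ0 hβ1)
  rw [F1_zero] at h
  obtain ⟨x, hx, hfx⟩ := h hz
  exact ⟨x, hx, hfx⟩

lemma F1inv_F1 {x : ℝ} (hx : x ∈ Icc (0:ℝ) 1) : F1inv β (F1 β x) = x :=
  (F1_strictMonoOn hβ0 hβ1).injOn.leftInvOn_invFunOn hx

lemma F1inv_mem {z : ℝ} (hz : z ∈ Icc 0 (F1 β 1)) : F1inv β z ∈ Icc (0:ℝ) 1 :=
  Function.invFunOn_mem (F1_surjOn hβ0 hβ1 hz)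

lemma F1_F1inv {z : ℝ} (hz : z ∈ Icc 0 (F1 β 1)) : F1 β (F1inv β z) = z :=
  Function.invFunOn_eq (F1_surjOn hβ0 hβ1 hz)

lemma F1inv_mono {z₁ z₂ : ℝ} (h1 : z₁ ∈ Icc 0 (F1 β 1)) (h2 : z₂ ∈ Icc 0 (F1 β 1))
    (h : z₁ ≤ z₂) : F1inv β z₁ ≤ F1inv β z₂ := by
  by_contra hlt
  push_neg at hlt
  have := (F1_strictMonoOn hβ0 hβ1) (F1inv_mem hβ0 hβ1 h2) (F1inv_mem hβ0 hβ1 h1) hlt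
  rw [F1_F1inv hβ0 hβ1 h1, F1_F1inv hβ0 hβ1 h2] at this
  linarith

lemma F1inv_lip {z₁ z₂ : ℝ} (h1 : z₁ ∈ Icc 0 (F1 β 1)) (h2 : z₂ ∈ Icc 0 (F1 β 1)) :
    |F1inv β z₁ - F1inv β z₂| ≤ |z₁ - z₂| := by
  wlog h : z₂ ≤ z₁ generalizing z₁ z₂
  · rw [abs_sub_comm, abs_sub_comm z₁ z₂]; exact this h2 h1 (by linarith)
  have hm := F1inv_mono hβ0 hβ1 h2 h1 h
  have hge := F1_ge_sub hβ0 hβ1 (F1inv_mem hβ0 hβ1 h2) (F1inv_mem hβ0 hβ1 h1) hm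
  rw [F1_F1inv hβ0 hβ1 h1, F1_F1inv hβ0 hβ1 h2] at hge
  rw [abs_of_nonneg (by linarith), abs_of_nonneg (by linarith)]
  linarith

lemma F1inv_mem_Ioo {z : ℝ} (hz : z ∈ Ioo 0 (F1 β 1)) : F1inv β z ∈ Ioo (0:ℝ) 1 := by
  have hmem := F1inv_mem hβ0 hβ1 (Ioo_subset_Icc_self hz)
  have heq := F1_F1inv hβ0 hβ1 (Ioo_subset_Icc_self hz)
  constructor
  · rcases lt_or_eq_of_le hmem.1 with h | h
    · exact h
    · exfalso; rw [← h] at heq; rw [F1_zero] at heq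
      exact absurd heq.symm (ne_of_gt hz.1)
  · rcases lt_or_eq_of_le hmem.2 with h | h
    · exact h
    · exfalso; rw [h] at heq; exact absurd heq (ne_of_gt hz.2)

end F1sec

section Drift
variable {β θ μ : ℝ} (hβ0 : 0 < β) (hβ1 : β < 1) (hθ : 0 < θ) (hμ0 : 0 < μ) (hμ1 : μ < 1)
include hβ0 hβ1

-- ∫₀^x v^{-β} dv = x^{1-β}/(1-β) and the key inequality x^{1-β} ≤ (1-β) F1 x
lemma F1_lower {x : ℝ} (hx0 : 0 ≤ x) (hx1 : x ≤ 1) :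
    x ^ (1 - β) ≤ (1 - β) * F1 β x := by
  have hint : ∫ v in (0:ℝ)..x, v ^ (-β) = x ^ (1 - β) / (1 - β) := by
    rw [integral_rpow (Or.inl (by linarith : (-1:ℝ) < -β))]
    rw [Real.zero_rpow (by intro h; linarith [h] : -β + 1 ≠ 0)]
    norm_num
    ring_nf
  have hmono : ∫ v in (0:ℝ)..x, v ^ (-β) ≤ F1 β x := by
    rw [show F1 β x = ∫ v in (0:ℝ)..x, (v * (1 - v)) ^ (-β) from rfl]
    refine integral_mono_ae_restrict hx0 (intervalIntegrable_rpow' (by linarith))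
      (F1_intInt hβ0 hβ1 (left_mem_Icc.2 zero_le_one) ⟨hx0, hx1⟩) ?_
    filter_upwards [ae_restrict_mem measurableSet_Icc,
      ae_restrict_of_ae ae_notmem01] with v hv hv01
    have hv0 : 0 < v := lt_of_le_of_ne hv.1 (by intro h; exact hv01 (by simp [← h]))
    have hv1 : v < 1 := lt_of_le_of_ne (hv.2.trans hx1) (by intro h; exact hv01 (by simp [h]))
    have h1v : 0 < 1 - v := by linarith
    rw [Real.mul_rpow hv0.le h1v.le]
    have h1 : (1:ℝ) ≤ (1 - v) ^ (-β) := by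
      have := Real.rpow_le_rpow_of_nonpos h1v (by linarith : 1 - v ≤ 1) (by linarith : -β ≤ 0)
      simpa using this
    nlinarith [Real.rpow_nonneg hv0.le (-β)]
  rw [hint] at hmono
  have h1β : 0 < 1 - β := by linarith
  calc x ^ (1-β) = (x ^ (1-β) / (1-β)) * (1-β) := by field_simp
    _ ≤ F1 β x * (1-β) := by nlinarith
    _ = (1-β) * F1 β x := by ring

-- symmetric upper-end inequality : (1-x)^{1-β} ≤ (1-β)(F1 1 - F1 x)
lemma F1_upper {x : ℝ} (hx0 : 0 ≤ x) (hx1 : x ≤ 1) :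
    (1 - x) ^ (1 - β) ≤ (1 - β) * (F1 β 1 - F1 β x) := by
  have hint : ∫ v in x..(1:ℝ), (1 - v) ^ (-β) = (1 - x) ^ (1 - β) / (1 - β) := by
    have hcomp := integral_comp_sub_left (a := x) (b := 1) (fun u : ℝ => u ^ (-β)) 1
    rw [hcomp]
    simp only [sub_self]
    rw [integral_rpow (Or.inl (by linarith : (-1:ℝ) < -β))]
    rw [Real.zero_rpow (by intro h; linarith [h] : -β + 1 ≠ 0)]
    norm_num
    ring_nf
  have hmono : ∫ v in x..(1:ℝ), (1 - v) ^ (-β) ≤ F1 β 1 - F1 β x := by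
    rw [F1_sub hβ0 hβ1 ⟨hx0, hx1⟩ (right_mem_Icc.2 zero_le_one)]
    have hii : IntervalIntegrable (fun v : ℝ => (1 - v) ^ (-β)) volume x 1 := by
      have := (intervalIntegrable_rpow' (r := -β) (by linarith) (a := 0) (b := 1 - x)).comp_sub_left 1
      simpa using this.symm
    refine integral_mono_ae_restrict hx1 hii
      (F1_intInt hβ0 hβ1 ⟨hx0, hx1⟩ (right_mem_Icc.2 zero_le_one)) ?_
    filter_upwards [ae_restrict_mem measurableSet_Icc,
      ae_restrict_of_ae ae_notmem01] with v hv hv01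
    have hv0 : 0 < v := lt_of_le_of_ne (hx0.trans hv.1) (by intro h; exact hv01 (by simp [← h]))
    have hv1 : v < 1 := lt_of_le_of_ne hv.2 (by intro h; exact hv01 (by simp [h]))
    have h1v : 0 < 1 - v := by linarith
    rw [Real.mul_rpow hv0.le h1v.le]
    have h1 : (1:ℝ) ≤ v ^ (-β) := by
      have := Real.rpow_le_rpow_of_nonpos hv0 hv1.le (by linarith : -β ≤ 0)
      simpa using this
    nlinarith [Real.rpow_nonneg h1v.le (-β)]
  rw [hint] at hmono
  have h1β : 0 < 1 - β := by linarith
  calc (1-x) ^ (1-β) = ((1-x) ^ (1-β) / (1-β)) * (1-β) := by field_simp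
    _ ≤ (F1 β 1 - F1 β x) * (1-β) := by nlinarith
    _ = (1-β) * (F1 β 1 - F1 β x) := by ring

-- from  x^{1-β} ≤ (1-β) z, x > 0 :  ((1-β) z)^{-β/(1-β)} ≤ x^{-β}
lemma pow_trick {x z : ℝ} (hx : 0 < x) (hz : x ^ (1 - β) ≤ (1 - β) * z) :
    ((1 - β) * z) ^ (-(β / (1 - β))) ≤ x ^ (-β) := by
  have h1β : 0 < 1 - β := by linarith
  have hxp : 0 < x ^ (1 - β) := Real.rpow_pos_of_pos hx _
  have h := Real.rpow_le_rpow_of_nonpos hxp hz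
    (neg_nonpos.mpr (by positivity : (0:ℝ) ≤ β / (1-β)))
  calc ((1-β)*z) ^ (-(β/(1-β))) ≤ (x ^ (1-β)) ^ (-(β/(1-β))) := h
    _ = x ^ ((1-β) * (-(β/(1-β)))) := (Real.rpow_mul hx.le _ _).symm
    _ = x ^ (-β) := by rw [show (1-β) * (-(β/(1-β))) = -β by field_simp]

include hθ hμ0 hμ1

-- lower drift bound near 0
lemma drift_lb {z : ℝ} (hz0 : 0 < z) (hz : z ≤ F1 β (μ/2)) :
    (θ*μ/2) * ((1-β)*z) ^ (-(β/(1-β))) ≤ G β θ μ (F1inv β z) := by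
  have hμ2 : μ/2 ∈ Icc (0:ℝ) 1 := ⟨by linarith, by linarith⟩
  have hzM : z ∈ Icc 0 (F1 β 1) := ⟨hz0.le, hz.trans
    (by rcases lt_or_eq_of_le hμ2.2 with h|h
        · linarith [F1_strictMonoOn hβ0 hβ1 hμ2 (right_mem_Icc.2 zero_le_one) h]
        · rw [h])⟩
  set x := F1inv β z with hxdef
  have hxIcc := F1inv_mem hβ0 hβ1 hzM
  rw [← hxdef] at hxIcc
  have hFx : F1 β x = z := F1_F1inv hβ0 hβ1 hzM
  have hx0 : 0 < x := by
    rcases lt_or_eq_of_le hxIcc.1 with h|h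
    · exact h
    · exfalso; rw [← h, F1_zero] at hFx; linarith
  have hxle : x ≤ μ/2 := by
    by_contra hlt
    push_neg at hlt
    have := F1_strictMonoOn hβ0 hβ1 hμ2 hxIcc hlt
    rw [hFx] at this; linarith
  have hx1 : x < 1 := by linarith
  have hkey : ((1-β)*z) ^ (-(β/(1-β))) ≤ x ^ (-β) := by
    refine pow_trick hβ0 hβ1 hx0 ?_
    rw [← hFx]; exact F1_lower hβ0 hβ1 hx0.le hxIcc.2
  have h1x : (1:ℝ) ≤ (1-x) ^ (-β) := by
    have := Real.rpow_le_rpow_of_nonpos (by linarith : (0:ℝ) < 1 - x)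
      (by linarith : 1 - x ≤ 1) (by linarith : -β ≤ 0)
    simpa using this
  have hsplit : (x*(1-x)) ^ (-β) = x ^ (-β) * (1-x) ^ (-β) :=
    Real.mul_rpow hx0.le (by linarith)
  have hμx : μ/2 ≤ μ - x := by linarith
  show (θ*μ/2) * ((1-β)*z) ^ (-(β/(1-β))) ≤ θ * (μ - x) * (x*(1-x)) ^ (-β)
  rw [hsplit]
  have hxv : 0 ≤ x ^ (-β) := Real.rpow_nonneg hx0.le _
  have hzv : 0 ≤ ((1-β)*z) ^ (-(β/(1-β))) := Real.rpow_nonneg (by nlinarith) _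
  have s1 : θ*μ/2 * (((1-β)*z) ^ (-(β/(1-β)))) ≤ θ*μ/2 * (x ^ (-β)) :=
    mul_le_mul_of_nonneg_left hkey (by positivity)
  have s2 : θ*μ/2 * (x ^ (-β)) ≤ θ*(μ-x) * (x ^ (-β)) := by
    apply mul_le_mul_of_nonneg_right _ hxv; nlinarith
  have s3 : θ*(μ-x) * (x ^ (-β)) ≤ θ*(μ-x) * (x ^ (-β) * (1-x) ^ (-β)) := by
    have hnn : 0 ≤ θ*(μ-x) * (x ^ (-β)) := mul_nonneg (mul_nonneg hθ.le (by linarith)) hxv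
    nlinarith [mul_le_mul_of_nonneg_left h1x hnn]
  linarith

-- upper drift bound near F1 1
lemma drift_ub {z : ℝ} (hz0 : 0 < z) (hz : z ≤ F1 β 1 - F1 β ((1+μ)/2)) :
    G β θ μ (F1inv β (F1 β 1 - z)) ≤ -((θ*(1-μ)/2) * ((1-β)*z) ^ (-(β/(1-β)))) := by
  have hμ2 : (1+μ)/2 ∈ Icc (0:ℝ) 1 := ⟨by linarith, by linarith⟩
  have hzM : F1 β 1 - z ∈ Icc 0 (F1 β 1) := by
    constructor
    · have h0 : (0:ℝ) ≤ F1 β ((1+μ)/2) := by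
        have := F1_ge_sub hβ0 hβ1 (left_mem_Icc.2 zero_le_one) hμ2 (by linarith)
        rw [F1_zero] at this; linarith
      linarith
    · linarith
  set x := F1inv β (F1 β 1 - z) with hxdef
  have hxIcc := F1inv_mem hβ0 hβ1 hzM
  rw [← hxdef] at hxIcc
  have hFx : F1 β x = F1 β 1 - z := F1_F1inv hβ0 hβ1 hzM
  have hx1 : x < 1 := by
    rcases lt_or_eq_of_le hxIcc.2 with h|h
    · exact h
    · exfalso; rw [h] at hFx; linarith
  have hxge : (1+μ)/2 ≤ x := by
    by_contra hlt
    push_neg at hlt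
    have := F1_strictMonoOn hβ0 hβ1 hxIcc hμ2 hlt
    rw [hFx] at this; linarith
  have hx0 : 0 < x := by linarith
  have hkey : ((1-β)*z) ^ (-(β/(1-β))) ≤ (1-x) ^ (-β) := by
    refine pow_trick hβ0 hβ1 (by linarith : (0:ℝ) < 1 - x) ?_
    have := F1_upper hβ0 hβ1 hx0.le hxIcc.2
    rw [hFx] at this
    calc (1-x) ^ (1-β) ≤ (1-β) * (F1 β 1 - (F1 β 1 - z)) := this
      _ = (1-β) * z := by ring
  have h1x : (1:ℝ) ≤ x ^ (-β) := by
    have := Real.rpow_le_rpow_of_nonpos hx0 hxIcc.2 (by linarith : -β ≤ 0)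
    simpa using this
  have hsplit : (x*(1-x)) ^ (-β) = x ^ (-β) * (1-x) ^ (-β) :=
    Real.mul_rpow hx0.le (by linarith)
  have hμx : μ - x ≤ -((1-μ)/2) := by linarith
  show θ * (μ - x) * (x*(1-x)) ^ (-β) ≤ -((θ*(1-μ)/2) * ((1-β)*z) ^ (-(β/(1-β))))
  rw [hsplit]
  have hxv : 0 ≤ (1-x) ^ (-β) := Real.rpow_nonneg (by linarith) _
  have hzv : 0 ≤ ((1-β)*z) ^ (-(β/(1-β))) := Real.rpow_nonneg (by nlinarith) _
  have hx2 : 0 ≤ x ^ (-β) := Real.rpow_nonneg hx0.le _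
  have s1 : θ*(μ-x) * (x ^ (-β) * (1-x) ^ (-β)) ≤ θ*(μ-x) * ((1-x) ^ (-β)) := by
    have hcoef : θ*(μ-x) ≤ 0 := mul_nonpos_of_nonneg_of_nonpos hθ.le (by linarith)
    have hbig : (1-x) ^ (-β) ≤ x ^ (-β) * (1-x) ^ (-β) := by
      nlinarith [mul_le_mul_of_nonneg_right h1x hxv]
    nlinarith [mul_le_mul_of_nonpos_left hbig hcoef]
  have s2 : θ*(μ-x) * ((1-x) ^ (-β)) ≤ (θ * (-((1-μ)/2))) * ((1-x) ^ (-β)) := by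
    apply mul_le_mul_of_nonneg_right _ hxv; nlinarith
  have s3 : (θ * (-((1-μ)/2))) * ((1-x) ^ (-β)) ≤ (θ * (-((1-μ)/2))) * (((1-β)*z) ^ (-(β/(1-β)))) := by
    have hcoef : θ * (-((1-μ)/2)) ≤ 0 := mul_nonpos_of_nonneg_of_nonpos hθ.le (by linarith)
    nlinarith [mul_le_mul_of_nonpos_left hkey hcoef]
  calc θ * (μ - x) * (x ^ (-β) * (1-x) ^ (-β)) ≤ (θ * (-((1-μ)/2))) * (((1-β)*z) ^ (-(β/(1-β)))) := by linarith
    _ = -((θ*(1-μ)/2) * ((1-β)*z) ^ (-(β/(1-β)))) := by ring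

end Drift
noncomputable def clampF (lo hi z : ℝ) : ℝ := max lo (min z hi)

lemma clampF_mem {lo hi z : ℝ} (h : lo ≤ hi) : clampF lo hi z ∈ Icc lo hi :=
  ⟨le_max_left _ _, max_le h (min_le_right _ _)⟩

lemma clampF_lip (lo hi : ℝ) (z z' : ℝ) : |clampF lo hi z - clampF lo hi z'| ≤ |z - z'| := by
  unfold clampF
  rw [max_comm lo, max_comm lo]
  refine (abs_max_sub_max_le_abs _ _ _).trans ?_
  have := abs_min_sub_min_le_max z hi z' hi
  simpa using this

lemma clampF_eq {lo hi z : ℝ} (h1 : lo ≤ z) (h2 : z ≤ hi) : clampF lo hi z = z := by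
  unfold clampF
  rw [min_eq_left h2, max_eq_right h1]

noncomputable def btfun (β θ μ lo hi z : ℝ) : ℝ := G β θ μ (F1inv β (clampF lo hi z))

section Lip
variable {β θ μ : ℝ} (hβ0 : 0 < β) (hβ1 : β < 1) (hθ : 0 < θ) (hμ0 : 0 < μ) (hμ1 : μ < 1)
include hβ0 hβ1 hθ hμ0 hμ1

lemma G_hasDerivAt {x : ℝ} (hx0 : 0 < x) (hx1 : x < 1) :
    HasDerivAt (G β θ μ)
      ((-θ) * (x*(1-x)) ^ (-β) + (θ*(μ-x)) * ((1-2*x) * (-β) * (x*(1-x)) ^ (-β-1))) x := by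
  have hne : x*(1-x) ≠ 0 := ne_of_gt (by nlinarith)
  have h1 : HasDerivAt (fun x : ℝ => x*(1-x)) (1-2*x) x := by
    have := (hasDerivAt_id x).mul ((hasDerivAt_const x (1:ℝ)).sub (hasDerivAt_id x))
    refine this.congr_deriv ?_
    show (1:ℝ) * (1 - x) + x * (0 - 1) = 1 - 2*x
    ring
  have h2 : HasDerivAt (fun x : ℝ => (x*(1-x)) ^ (-β)) ((1-2*x) * (-β) * (x*(1-x)) ^ (-β-1)) x :=
    h1.rpow_const (Or.inl hne)
  have h3 : HasDerivAt (fun x : ℝ => θ*(μ-x)) (-θ) x := by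
    have := ((hasDerivAt_const x μ).sub (hasDerivAt_id x)).const_mul θ
    refine this.congr_deriv ?_
    show θ * (0 - 1) = -θ
    ring
  have := h3.mul h2
  exact this

lemma G_lipOn {a c : ℝ} (ha : 0 < a) (hc : c < 1) (hac : a ≤ c) :
    ∃ L, 0 ≤ L ∧ ∀ x ∈ Icc a c, ∀ y ∈ Icc a c, |G β θ μ x - G β θ μ y| ≤ L * |x - y| := by
  set m := a * (1 - c) with hm
  have hm0 : 0 < m := by
    rw [hm]; exact mul_pos ha (by linarith)
  set L := θ * m ^ (-β) + θ * (β * m ^ (-β-1)) with hL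
  have hL0 : 0 ≤ L := by
    rw [hL]
    exact add_nonneg (mul_nonneg hθ.le (Real.rpow_nonneg hm0.le _))
      (mul_nonneg hθ.le (mul_nonneg hβ0.le (Real.rpow_nonneg hm0.le _)))
  refine ⟨L, hL0, ?_⟩
  intro x hx y hy
  have hder : ∀ u ∈ Icc a c, HasDerivWithinAt (G β θ μ)
      ((-θ) * (u*(1-u)) ^ (-β) + (θ*(μ-u)) * ((1-2*u) * (-β) * (u*(1-u)) ^ (-β-1))) (Icc a c) u :=
    fun u hu => (G_hasDerivAt hβ0 hβ1 hθ hμ0 hμ1 (lt_of_lt_of_le ha hu.1)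
      (lt_of_le_of_lt hu.2 hc)).hasDerivWithinAt
  have hbound : ∀ u ∈ Icc a c,
      ‖(-θ) * (u*(1-u)) ^ (-β) + (θ*(μ-u)) * ((1-2*u) * (-β) * (u*(1-u)) ^ (-β-1))‖ ≤ L := by
    intro u hu
    have hu0 : 0 < u := lt_of_lt_of_le ha hu.1
    have hu1 : u < 1 := lt_of_le_of_lt hu.2 hc
    have hp0 : 0 < u * (1-u) := by nlinarith
    have hpm : m ≤ u * (1-u) := by
      rw [hm]
      have k1 : a*(1-u) ≤ u*(1-u) := mul_le_mul_of_nonneg_right hu.1 (by linarith)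
      have k2 : a*(1-c) ≤ a*(1-u) := mul_le_mul_of_nonneg_left (by linarith [hu.2]) ha.le
      linarith
    have hb1 : (u*(1-u)) ^ (-β) ≤ m ^ (-β) :=
      Real.rpow_le_rpow_of_nonpos hm0 hpm (by linarith)
    have hb2 : (u*(1-u)) ^ (-β-1) ≤ m ^ (-β-1) :=
      Real.rpow_le_rpow_of_nonpos hm0 hpm (by linarith)
    have hnn1 : 0 ≤ (u*(1-u)) ^ (-β) := Real.rpow_nonneg hp0.le _
    have hnn2 : 0 ≤ (u*(1-u)) ^ (-β-1) := Real.rpow_nonneg hp0.le _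
    have habs1 : |μ - u| ≤ 1 := by rw [abs_le]; constructor <;> linarith
    have habs2 : |1 - 2*u| ≤ 1 := by rw [abs_le]; constructor <;> linarith
    calc ‖(-θ) * (u*(1-u)) ^ (-β) + (θ*(μ-u)) * ((1-2*u) * (-β) * (u*(1-u)) ^ (-β-1))‖
        ≤ ‖(-θ) * (u*(1-u)) ^ (-β)‖ + ‖(θ*(μ-u)) * ((1-2*u) * (-β) * (u*(1-u)) ^ (-β-1))‖ :=
          norm_add_le _ _
      _ = θ * (u*(1-u)) ^ (-β) + (θ*|μ-u|) * (|1-2*u| * β * (u*(1-u)) ^ (-β-1)) := by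
          simp only [Real.norm_eq_abs, abs_mul, abs_neg, abs_of_pos hθ, abs_of_pos hβ0,
            abs_of_nonneg hnn1, abs_of_nonneg hnn2]
          try ring
      _ ≤ θ * m ^ (-β) + (θ*1) * (1 * β * m ^ (-β-1)) := by
          have c1 : θ * (u*(1-u)) ^ (-β) ≤ θ * m ^ (-β) :=
            mul_le_mul_of_nonneg_left hb1 hθ.le
          have c2 : (θ*|μ-u|) * (|1-2*u| * β * (u*(1-u)) ^ (-β-1))
              ≤ (θ*1) * (1 * β * m ^ (-β-1)) := by
            have h1 : |1-2*u| * β * (u*(1-u)) ^ (-β-1) ≤ 1 * β * m ^ (-β-1) := by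
              have := mul_le_mul habs2 hb2 hnn2 zero_le_one
              nlinarith [abs_nonneg (1-2*u), hβ0.le]
            have h2 : θ*|μ-u| ≤ θ*1 := mul_le_mul_of_nonneg_left habs1 hθ.le
            exact mul_le_mul h2 h1 (by positivity) (by positivity)
          linarith
      _ = L := by rw [hL]; ring
  have := (convex_Icc a c).norm_image_sub_le_of_norm_hasDerivWithin_le hder hbound hy hx
  simpa [Real.norm_eq_abs] using this

lemma bt_lip {lo hi : ℝ} (hlo : 0 < lo) (hhi : hi < F1 β 1) (hlohi : lo ≤ hi) :
    ∃ L, 0 ≤ L ∧ ∀ z z', |btfun β θ μ lo hi z - btfun β θ μ lo hi z'| ≤ L * |z - z'| := by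
  have hM0 : 0 < F1 β 1 := F1_one_pos hβ0 hβ1
  have hloM : lo ∈ Icc 0 (F1 β 1) := ⟨hlo.le, by linarith⟩
  have hhiM : hi ∈ Icc 0 (F1 β 1) := ⟨by linarith, hhi.le⟩
  set a := F1inv β lo with hadef
  set c := F1inv β hi with hcdef
  have ha : 0 < a := (F1inv_mem_Ioo hβ0 hβ1 ⟨hlo, by linarith⟩).1
  have hc : c < 1 := (F1inv_mem_Ioo hβ0 hβ1 ⟨by linarith, hhi⟩).2
  have hac : a ≤ c := F1inv_mono hβ0 hβ1 hloM hhiM hlohi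
  obtain ⟨L, hL0, hLip⟩ := G_lipOn hβ0 hβ1 hθ hμ0 hμ1 ha hc hac
  refine ⟨L, hL0, ?_⟩
  intro z z'
  have hmem : ∀ u : ℝ, F1inv β (clampF lo hi u) ∈ Icc a c := by
    intro u
    have h1 := clampF_mem (z := u) hlohi
    have h2 : clampF lo hi u ∈ Icc 0 (F1 β 1) := ⟨by linarith [h1.1], by linarith [h1.2]⟩
    exact ⟨F1inv_mono hβ0 hβ1 hloM h2 h1.1, F1inv_mono hβ0 hβ1 h2 hhiM h1.2⟩
  have step1 := hLip _ (hmem z) _ (hmem z')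
  have hcl1 : clampF lo hi z ∈ Icc 0 (F1 β 1) := by
    have := clampF_mem (z := z) hlohi; exact ⟨by linarith [this.1], by linarith [this.2]⟩
  have hcl2 : clampF lo hi z' ∈ Icc 0 (F1 β 1) := by
    have := clampF_mem (z := z') hlohi; exact ⟨by linarith [this.1], by linarith [this.2]⟩
  have step2 := F1inv_lip hβ0 hβ1 hcl1 hcl2
  have step3 := clampF_lip lo hi z z'
  calc |btfun β θ μ lo hi z - btfun β θ μ lo hi z'|
      ≤ L * |F1inv β (clampF lo hi z) - F1inv β (clampF lo hi z')| := step1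
    _ ≤ L * |z - z'| := by
        refine mul_le_mul_of_nonneg_left (step2.trans step3) hL0

lemma b_contOn : ContinuousOn (fun z => G β θ μ (F1inv β z)) (Ioo 0 (F1 β 1)) := by
  intro z hz
  set lo := z/2 with hlodef
  set hi := (z + F1 β 1)/2 with hhidef
  have hlo : 0 < lo := by have := hz.1; positivity
  have hhi : hi < F1 β 1 := by have := hz.2; rw [hhidef]; linarith
  have hlohi : lo ≤ hi := by have := hz.1; have := hz.2; rw [hlodef, hhidef]; linarith
  obtain ⟨L, hL0, hLip⟩ := bt_lip hβ0 hβ1 hθ hμ0 hμ1 hlo hhi hlohi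
  have hbtc : Continuous (btfun β θ μ lo hi) := by
    refine LipschitzWith.continuous (K := Real.toNNReal L) ?_
    refine LipschitzWith.of_dist_le_mul ?_
    intro u v
    rw [Real.dist_eq, Real.dist_eq, Real.coe_toNNReal _ hL0]
    exact hLip u v
  have hev : (fun z => G β θ μ (F1inv β z)) =ᶠ[nhds z] btfun β θ μ lo hi := by
    have hIoo : Ioo lo hi ∈ nhds z := by
      refine isOpen_Ioo.mem_nhds ⟨?_, ?_⟩
      · rw [hlodef]; linarith [hz.1]
      · rw [hhidef]; linarith [hz.2]
    filter_upwards [hIoo] with u hu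
    unfold btfun
    rw [clampF_eq hu.1.le hu.2.le]
  exact ((hbtc.continuousAt).congr hev.symm).continuousWithinAt

end Lip
-- Abstract barrier lemma
lemma barrier {b g y : ℝ → ℝ} {T K A δ y₀ a : ℝ} (hT : 0 < T)
    (hy : ContinuousOn y (Icc 0 T))
    (hbi : IntervalIntegrable (fun s => b (y s)) volume 0 T)
    (heq : ∀ t ∈ Icc (0:ℝ) T, y t = y₀ + (∫ s in (0:ℝ)..t, b (y s)) + g t)
    (hg0 : g 0 = 0)
    (hg : ∀ s ∈ Icc (0:ℝ) T, ∀ t ∈ Icc (0:ℝ) T, |g t - g s| ≤ K * |t - s| ^ a)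
    (hδ : 0 < δ) (hy₀ : 2*δ < y₀)
    (hA : ∀ z ∈ Icc δ (2*δ), A ≤ b z)
    (hcrit : ∀ τ > (0:ℝ), K * τ ^ a < δ + A * τ) :
    ∀ t ∈ Icc (0:ℝ) T, δ < y t := by
  have hy0 : y 0 = y₀ := by
    have h := heq 0 ⟨le_refl 0, hT.le⟩
    simpa [hg0] using h
  by_contra hcon
  push_neg at hcon
  obtain ⟨t₀, ht₀, ht₀le⟩ := hcon
  set S := {t | t ∈ Icc (0:ℝ) T ∧ y t ≤ δ} with hS
  have hSne : S.Nonempty := ⟨t₀, ht₀, ht₀le⟩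
  have hSclosed : IsClosed S := by
    have : S = Icc 0 T ∩ y ⁻¹' (Iic δ) := by ext u; simp [hS, and_comm]
    rw [this]
    exact ContinuousOn.preimage_isClosed_of_isClosed hy isClosed_Icc isClosed_Iic
  have hSbdd : BddBelow S := ⟨0, fun u hu => hu.1.1⟩
  set t₁ := sInf S with ht₁def
  have ht₁S : t₁ ∈ S := hSclosed.csInf_mem hSne hSbdd
  have ht₁Icc : t₁ ∈ Icc (0:ℝ) T := ht₁S.1
  -- y t₁ = δ via IVT
  have hyt₁ : y t₁ = δ := by
    have hsub : Icc (0:ℝ) t₁ ⊆ Icc 0 T := Icc_subset_Icc (le_refl _) ht₁Icc.2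
    have hivt := intermediate_value_Icc' ht₁Icc.1 (hy.mono hsub)
    have hδmem : δ ∈ Icc (y t₁) (y 0) := ⟨ht₁S.2, by rw [hy0]; linarith⟩
    obtain ⟨t₂, ht₂, hyt₂⟩ := hivt hδmem
    have ht₂S : t₂ ∈ S := ⟨⟨ht₂.1, ht₂.2.trans ht₁Icc.2⟩, le_of_eq hyt₂⟩
    have : t₁ ≤ t₂ := csInf_le hSbdd ht₂S
    have ht₂eq : t₂ = t₁ := le_antisymm ht₂.2 this
    rw [← ht₂eq]; exact hyt₂
  have ht₁pos : 0 < t₁ := by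
    rcases lt_or_eq_of_le ht₁Icc.1 with h | h
    · exact h
    · exfalso; rw [← h] at hyt₁; rw [hy0] at hyt₁; linarith
  -- last time ≥ 2δ before t₁
  set S₂ := {s | s ∈ Icc (0:ℝ) t₁ ∧ 2*δ ≤ y s} with hS₂
  have hS₂ne : S₂.Nonempty := ⟨0, ⟨le_refl 0, ht₁Icc.1⟩, by rw [hy0]; linarith⟩
  have hS₂closed : IsClosed S₂ := by
    have : S₂ = Icc 0 t₁ ∩ y ⁻¹' (Ici (2*δ)) := by ext u; simp [hS₂, and_comm]
    rw [this]
    exact ContinuousOn.preimage_isClosed_of_isClosed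
      (hy.mono (Icc_subset_Icc (le_refl _) ht₁Icc.2)) isClosed_Icc isClosed_Ici
  have hS₂bdd : BddAbove S₂ := ⟨t₁, fun u hu => hu.1.2⟩
  set s₁ := sSup S₂ with hs₁def
  have hs₁S : s₁ ∈ S₂ := hS₂closed.csSup_mem hS₂ne hS₂bdd
  have hs₁Icc : s₁ ∈ Icc (0:ℝ) t₁ := hs₁S.1
  have hs₁lt : s₁ < t₁ := by
    rcases lt_or_eq_of_le hs₁Icc.2 with h | h
    · exact h
    · exfalso; have := hs₁S.2; rw [h, hyt₁] at this; linarith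
  -- y s₁ = 2δ via IVT on [s₁, t₁]
  have hys₁ : y s₁ = 2*δ := by
    have hsub : Icc s₁ t₁ ⊆ Icc 0 T := Icc_subset_Icc hs₁Icc.1 ht₁Icc.2
    have hivt := intermediate_value_Icc' hs₁Icc.2 (hy.mono hsub)
    have hmem : 2*δ ∈ Icc (y t₁) (y s₁) := ⟨by rw [hyt₁]; linarith, hs₁S.2⟩
    obtain ⟨s₂, hs₂, hys₂⟩ := hivt hmem
    have hs₂S : s₂ ∈ S₂ := ⟨⟨hs₁Icc.1.trans hs₂.1, hs₂.2⟩, le_of_eq hys₂.symm⟩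
    have : s₂ ≤ s₁ := le_csSup hS₂bdd hs₂S
    have hs₂eq : s₂ = s₁ := le_antisymm this hs₂.1
    rw [← hs₂eq]; exact hys₂
  -- y ∈ [δ, 2δ] on [s₁, t₁]
  have hrange : ∀ s ∈ Icc s₁ t₁, y s ∈ Icc δ (2*δ) := by
    intro s hs
    have hsIcc : s ∈ Icc (0:ℝ) T := ⟨hs₁Icc.1.trans hs.1, hs.2.trans ht₁Icc.2⟩
    constructor
    · rcases lt_or_eq_of_le hs.2 with h | h
      · by_contra hlt
        push_neg at hlt
        have : s ∈ S := ⟨hsIcc, hlt.le⟩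
        have := csInf_le hSbdd this
        linarith
      · rw [h, hyt₁]
    · rcases lt_or_eq_of_le hs.1 with h | h
      · by_contra hlt
        push_neg at hlt
        have : s ∈ S₂ := ⟨⟨hs₁Icc.1.trans hs.1, hs.2⟩, hlt.le⟩
        have := le_csSup hS₂bdd this
        linarith
      · rw [← h, hys₁]
  -- the increment identity
  have hii1 : IntervalIntegrable (fun s => b (y s)) volume 0 s₁ := by
    refine hbi.mono_set ?_
    rw [uIcc_of_le (hs₁Icc.1), uIcc_of_le hT.le]
    exact Icc_subset_Icc (le_refl _) (hs₁Icc.2.trans ht₁Icc.2)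
  have hii2 : IntervalIntegrable (fun s => b (y s)) volume s₁ t₁ := by
    refine hbi.mono_set ?_
    rw [uIcc_of_le (hs₁Icc.2), uIcc_of_le hT.le]
    exact Icc_subset_Icc hs₁Icc.1 ht₁Icc.2
  have hsplit : (∫ s in (0:ℝ)..t₁, b (y s)) - (∫ s in (0:ℝ)..s₁, b (y s))
      = ∫ s in s₁..t₁, b (y s) := by
    have := integral_add_adjacent_intervals hii1 hii2
    linarith
  have heqt₁ := heq t₁ ht₁Icc
  have heqs₁ := heq s₁ ⟨hs₁Icc.1, hs₁Icc.2.trans ht₁Icc.2⟩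
  have hincr : y t₁ - y s₁ = (∫ s in s₁..t₁, b (y s)) + (g t₁ - g s₁) := by
    rw [heqt₁, heqs₁, ← hsplit]; ring
  -- bound the integral from below
  have hIbound : A * (t₁ - s₁) ≤ ∫ s in s₁..t₁, b (y s) := by
    have hmono := integral_mono_on hs₁lt.le (intervalIntegrable_const (c := A)) hii2
      (fun s hs => hA (y s) (hrange s hs))
    rw [intervalIntegral.integral_const] at hmono
    simpa [smul_eq_mul, mul_comm] using hmono
  -- bound the noise
  have hgbound : |g t₁ - g s₁| ≤ K * (t₁ - s₁) ^ a := by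
    have := hg s₁ ⟨hs₁Icc.1, hs₁Icc.2.trans ht₁Icc.2⟩ t₁ ht₁Icc
    rwa [abs_of_pos (by linarith : (0:ℝ) < t₁ - s₁)] at this
  have hcrit' := hcrit (t₁ - s₁) (by linarith)
  have habs := abs_le.1 hgbound
  rw [hyt₁, hys₁] at hincr
  linarith

-- the criterion lemma
lemma crit_of {K A δ a : ℝ} (ha0 : 0 < a) (ha1 : a ≤ 1) (hK : 0 < K) (hδ : 0 < δ)
    (hA : K * (δ / K) ^ ((a - 1)/a) ≤ A) :
    ∀ τ > (0:ℝ), K * τ ^ a < δ + A * τ := by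
  intro τ hτ
  set τ₀ := (δ/K) ^ (1/a) with hτ₀def
  have hδK : 0 < δ/K := by positivity
  have hτ₀pos : 0 < τ₀ := Real.rpow_pos_of_pos hδK _
  have hA0 : 0 < A := lt_of_lt_of_le (by positivity) hA
  rcases le_or_gt τ τ₀ with h | h
  · have h1 : τ ^ a ≤ τ₀ ^ a := Real.rpow_le_rpow hτ.le h ha0.le
    have h2 : τ₀ ^ a = δ / K := by
      rw [hτ₀def, ← Real.rpow_mul hδK.le, one_div, inv_mul_cancel₀ (ne_of_gt ha0),
        Real.rpow_one]
    have h3 : K * τ ^ a ≤ δ := by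
      have := mul_le_mul_of_nonneg_left h1 hK.le
      rw [h2] at this
      calc K * τ ^ a ≤ K * (δ/K) := this
        _ = δ := by field_simp
    nlinarith
  · have h1 : τ ^ (a-1) ≤ τ₀ ^ (a-1) :=
      Real.rpow_le_rpow_of_nonpos hτ₀pos h.le (by linarith)
    have h2 : τ₀ ^ (a-1) = (δ/K) ^ ((a-1)/a) := by
      rw [hτ₀def, ← Real.rpow_mul hδK.le]
      congr 1
      field_simp
    have h3 : τ ^ a = τ ^ (a-1) * τ := by
      rw [← Real.rpow_add_one (ne_of_gt hτ)]
      congr 1; ring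
    have h4 : K * τ ^ a ≤ K * (δ/K) ^ ((a-1)/a) * τ := by
      rw [h3, ← mul_assoc]
      refine mul_le_mul_of_nonneg_right ?_ hτ.le
      refine mul_le_mul_of_nonneg_left ?_ hK.le
      rw [← h2]; exact h1
    have h5 : K * (δ/K) ^ ((a-1)/a) * τ ≤ A * τ := mul_le_mul_of_nonneg_right hA hτ.le
    linarith
lemma delta_choice {a ρ C₂ K P1 P2 P3 P4 : ℝ} (ha0 : 0 < a) (ha1 : a ≤ 1) (hρ : 0 < ρ)
    (he : (1-a)/a < ρ) (hC₂ : 0 < C₂) (hK : 0 < K)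
    (hP1 : 0 < P1) (hP2 : 0 < P2) (hP3 : 0 < P3) (hP4 : 0 < P4) :
    ∃ δ : ℝ, 0 < δ ∧ 2*δ < P1 ∧ 2*δ < P2 ∧ 2*δ ≤ P3 ∧ 2*δ ≤ P4 ∧
      K * (δ/K) ^ ((a-1)/a) ≤ C₂ * δ ^ (-ρ) := by
  set r := (a-1)/a with hrdef
  have hr : r ≤ 0 := div_nonpos_of_nonpos_of_nonneg (by linarith) ha0.le
  set e := ρ + r with hedef
  have he' : 0 < e := by
    have : r = -((1-a)/a) := by rw [hrdef]; ring_nf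
    rw [hedef, this]; linarith
  have hKr : 0 < K ^ r := Real.rpow_pos_of_pos hK _
  set D := C₂ * K ^ r / K with hDdef
  have hD : 0 < D := by positivity
  have hD1e : 0 < D ^ (1/e) := Real.rpow_pos_of_pos hD _
  set δ := min (min (P1/4) (P2/4)) (min (min (P3/2) (P4/2)) (D ^ (1/e))) with hδdef
  have hδ0 : 0 < δ := by
    rw [hδdef]
    refine lt_min (lt_min (by linarith) (by linarith)) (lt_min (lt_min ?_ ?_) hD1e) <;> linarith
  refine ⟨δ, hδ0, ?_, ?_, ?_, ?_, ?_⟩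
  · have : δ ≤ P1/4 := (min_le_left _ _).trans (min_le_left _ _); linarith
  · have : δ ≤ P2/4 := (min_le_left _ _).trans (min_le_right _ _); linarith
  · have : δ ≤ P3/2 := (min_le_right _ _).trans ((min_le_left _ _).trans (min_le_left _ _))
    linarith
  · have : δ ≤ P4/2 := (min_le_right _ _).trans ((min_le_left _ _).trans (min_le_right _ _))
    linarith
  · have hle : δ ≤ D ^ (1/e) := (min_le_right _ _).trans (min_le_right _ _)
    have key : δ ^ e ≤ D := by
      calc δ ^ e ≤ (D ^ (1/e)) ^ e := Real.rpow_le_rpow hδ0.le hle he'.le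
        _ = D := by
          rw [← Real.rpow_mul hD.le, one_div, inv_mul_cancel₀ (ne_of_gt he'), Real.rpow_one]
    have hsplit : (δ/K) ^ r = δ ^ r / K ^ r := Real.div_rpow hδ0.le hK.le _
    have hδr : δ ^ r = δ ^ e * δ ^ (-ρ) := by
      rw [← Real.rpow_add hδ0]
      congr 1
      rw [hedef]; ring
    have hδρ : 0 < δ ^ (-ρ) := Real.rpow_pos_of_pos hδ0 _
    rw [hsplit, hδr]
    have hstep : δ ^ e * δ ^ (-ρ) ≤ D * δ ^ (-ρ) := mul_le_mul_of_nonneg_right key hδρ.le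
    have h1 : K * (δ ^ e * δ ^ (-ρ) / K ^ r) = (K / K ^ r) * (δ ^ e * δ ^ (-ρ)) := by ring
    rw [h1]
    have h2 : (K / K ^ r) * (δ ^ e * δ ^ (-ρ)) ≤ (K / K ^ r) * (D * δ ^ (-ρ)) :=
      mul_le_mul_of_nonneg_left hstep (by positivity)
    have h3 : (K / K ^ r) * (D * δ ^ (-ρ)) = C₂ * δ ^ (-ρ) := by
      rw [hDdef]; field_simp; try ring
    rw [← h3]; exact h2
lemma holder_contOn {w : ℝ → ℝ} {C aa T : ℝ} (ha0 : 0 < aa)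
    (hC : ∀ s ∈ Icc (0:ℝ) T, ∀ t ∈ Icc (0:ℝ) T, |w t - w s| ≤ C * |t - s| ^ aa) :
    ContinuousOn w (Icc 0 T) := by
  intro t₀ ht₀
  rw [Metric.continuousWithinAt_iff]
  intro ε hε
  set K' := max C 1 with hK'
  have hK'0 : 0 < K' := lt_of_lt_of_le one_pos (le_max_right _ _)
  refine ⟨(ε/K') ^ (1/aa), Real.rpow_pos_of_pos (by positivity) _, ?_⟩
  intro t ht hdist
  have h1 : |w t - w t₀| ≤ C * |t - t₀| ^ aa := hC t₀ ht₀ t ht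
  have h2 : C * |t - t₀| ^ aa ≤ K' * |t - t₀| ^ aa :=
    mul_le_mul_of_nonneg_right (le_max_left _ _) (Real.rpow_nonneg (abs_nonneg _) _)
  have h3 : |t - t₀| ^ aa < ((ε/K') ^ (1/aa)) ^ aa := by
    rcases eq_or_lt_of_le (abs_nonneg (t - t₀)) with h | h
    · rw [← h, Real.zero_rpow (ne_of_gt ha0)]
      exact Real.rpow_pos_of_pos (Real.rpow_pos_of_pos (by positivity) _) _
    · exact Real.rpow_lt_rpow (abs_nonneg _) (by rwa [Real.dist_eq] at hdist) ha0
  have h4 : ((ε/K') ^ (1/aa)) ^ aa = ε/K' := by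
    rw [← Real.rpow_mul (by positivity), one_div, inv_mul_cancel₀ (ne_of_gt ha0), Real.rpow_one]
  rw [h4] at h3
  rw [Real.dist_eq]
  calc |w t - w t₀| ≤ K' * |t - t₀| ^ aa := h1.trans h2
    _ < K' * (ε/K') := by exact mul_lt_mul_of_pos_left h3 hK'0
    _ = ε := by field_simp
set_option maxHeartbeats 2000000 in
lemma exun {β θ μ γ aa : ℝ} {w : ℝ → ℝ} (hβ0 : 0 < β) (hβ1 : β < 1) (hθ : 0 < θ)
    (hμ0 : 0 < μ) (hμ1 : μ < 1) (ha0 : 0 < aa) (ha1 : aa ≤ 1) (hab : 1 - aa < β)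
    (hw0 : w 0 = 0)
    (hw : ∀ T > (0:ℝ), ∃ C : ℝ, ∀ s ∈ Icc (0:ℝ) T, ∀ t ∈ Icc (0:ℝ) T,
      |w t - w s| ≤ C * |t - s| ^ aa)
    {y₀ : ℝ} (hy₀ : y₀ ∈ Ioo 0 (F1 β 1)) (T : ℝ) (hT : 0 < T) :
    ∃ yT : ℝ → ℝ,
      (ContinuousOn yT (Icc 0 T) ∧ (∀ t ∈ Icc (0:ℝ) T, yT t ∈ Ioo 0 (F1 β 1)) ∧
       (∀ t ∈ Icc (0:ℝ) T,
         yT t = y₀ + (∫ s in (0:ℝ)..t, G β θ μ (F1inv β (yT s))) + γ*θ^β*w t)) ∧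
      ∀ y' : ℝ → ℝ,
        (ContinuousOn y' (Icc 0 T) ∧ (∀ t ∈ Icc (0:ℝ) T, y' t ∈ Ioo 0 (F1 β 1)) ∧
         (∀ t ∈ Icc (0:ℝ) T,
           y' t = y₀ + (∫ s in (0:ℝ)..t, G β θ μ (F1inv β (y' s))) + γ*θ^β*w t)) →
        ∀ t ∈ Icc (0:ℝ) T, y' t = yT t := by
  obtain ⟨C, hC⟩ := hw T hT
  set M := F1 β 1 with hMdef
  have hM0 : 0 < M := F1_one_pos hβ0 hβ1
  set b : ℝ → ℝ := fun z => G β θ μ (F1inv β z) with hbdef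
  set g : ℝ → ℝ := fun t => γ*θ^β*w t with hgdef
  have hg0 : g 0 = 0 := by rw [hgdef]; simp [hw0]
  set K := max 1 (|γ*θ^β| * |C|) with hKdef
  have hK0 : (0:ℝ) < K := lt_of_lt_of_le one_pos (le_max_left _ _)
  have hgH : ∀ s ∈ Icc (0:ℝ) T, ∀ t ∈ Icc (0:ℝ) T, |g t - g s| ≤ K * |t - s| ^ aa := by
    intro s hs t ht
    have h1 : |g t - g s| = |γ*θ^β| * |w t - w s| := by
      rw [hgdef]; rw [← abs_mul]; congr 1; ring
    have h2 := hC s hs t ht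
    have h3 : |γ*θ^β| * |w t - w s| ≤ |γ*θ^β| * (C * |t - s| ^ aa) :=
      mul_le_mul_of_nonneg_left h2 (abs_nonneg _)
    have h4 : |γ*θ^β| * (C * |t - s| ^ aa) ≤ |γ*θ^β| * |C| * |t - s| ^ aa := by
      have hr : (0:ℝ) ≤ |t - s| ^ aa := Real.rpow_nonneg (abs_nonneg _) _
      have hcr : C * |t - s| ^ aa ≤ |C| * |t - s| ^ aa :=
        mul_le_mul_of_nonneg_right (le_abs_self C) hr
      calc |γ*θ^β| * (C * |t - s| ^ aa) ≤ |γ*θ^β| * (|C| * |t - s| ^ aa) :=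
            mul_le_mul_of_nonneg_left hcr (abs_nonneg _)
        _ = |γ*θ^β| * |C| * |t - s| ^ aa := by ring
    have h5 : |γ*θ^β| * |C| ≤ K := le_max_right _ _
    have hr : (0:ℝ) ≤ |t - s| ^ aa := Real.rpow_nonneg (abs_nonneg _) _
    calc |g t - g s| ≤ |γ*θ^β| * |C| * |t - s| ^ aa := by rw [h1]; linarith
      _ ≤ K * |t - s| ^ aa := mul_le_mul_of_nonneg_right h5 hr
  -- constants for the barrier
  set ρ := β/(1-β) with hρdef
  have hρ0 : 0 < ρ := by rw [hρdef]; exact div_pos hβ0 (by linarith)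
  have he : (1-aa)/aa < ρ := by
    rw [hρdef, div_lt_div_iff₀ ha0 (by linarith : (0:ℝ) < 1 - β)]
    nlinarith
  set cmin := min (θ*μ/2) (θ*(1-μ)/2) with hcmindef
  have hcmin : 0 < cmin := lt_min (by positivity) (by nlinarith)
  set C₂ := cmin * ((2*(1-β)) ^ (-ρ)) with hC₂def
  have hC₂ : 0 < C₂ := mul_pos hcmin (Real.rpow_pos_of_pos (by linarith) _)
  have hP3 : 0 < F1 β (μ/2) := by
    have := F1_ge_sub hβ0 hβ1 (left_mem_Icc.2 zero_le_one) ⟨by linarith, by linarith⟩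
      (by linarith : (0:ℝ) ≤ μ/2)
    rw [F1_zero] at this; linarith
  have hP4 : 0 < M - F1 β ((1+μ)/2) := by
    have := F1_ge_sub hβ0 hβ1 (⟨by linarith, by linarith⟩ : (1+μ)/2 ∈ Icc (0:ℝ) 1)
      (right_mem_Icc.2 zero_le_one) (by linarith)
    rw [hMdef]; linarith
  obtain ⟨δ, hδ0, hδ1, hδ2, hδ3, hδ4, hδ5⟩ := delta_choice ha0 ha1 hρ0 he hC₂ hK0
    hy₀.1 (sub_pos.2 hy₀.2) hP3 hP4
  set A := C₂ * δ ^ (-ρ) with hAdef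
  have hcrit : ∀ τ > (0:ℝ), K * τ ^ aa < δ + A * τ := crit_of ha0 ha1 hK0 hδ0 hδ5
  have h4δ : 4*δ < M := by linarith [hy₀.1, hy₀.2]
  -- the rpow comparison used in both drift bounds
  have hcomp : ∀ z ∈ Icc δ (2*δ), A ≤ cmin * ((1-β)*z) ^ (-ρ) := by
    intro z hz
    have hz0 : 0 < z := lt_of_lt_of_le hδ0 hz.1
    have h1 : ((1-β)*z) ^ (-ρ) ≥ ((1-β)*(2*δ)) ^ (-ρ) := by
      have hb' : (0:ℝ) < 1 - β := by linarith
      refine Real.rpow_le_rpow_of_nonpos (mul_pos hb' hz0) ?_ (by linarith)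
      exact mul_le_mul_of_nonneg_left hz.2 hb'.le
    have h2 : ((1-β)*(2*δ)) ^ (-ρ) = (2*(1-β)) ^ (-ρ) * δ ^ (-ρ) := by
      rw [show (1-β)*(2*δ) = (2*(1-β))*δ by ring, Real.mul_rpow (by linarith) hδ0.le]
    rw [hAdef, hC₂def]
    calc cmin * (2*(1-β)) ^ (-ρ) * δ ^ (-ρ) = cmin * ((1-β)*(2*δ)) ^ (-ρ) := by
          rw [h2]; ring
      _ ≤ cmin * ((1-β)*z) ^ (-ρ) := mul_le_mul_of_nonneg_left h1 hcmin.le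
  have hAlow : ∀ z ∈ Icc δ (2*δ), A ≤ b z := by
    intro z hz
    have hz0 : 0 < z := lt_of_lt_of_le hδ0 hz.1
    have hdl := drift_lb hβ0 hβ1 hθ hμ0 hμ1 hz0 (le_trans hz.2 hδ3)
    refine le_trans (le_trans (hcomp z hz) ?_) hdl
    exact mul_le_mul_of_nonneg_right (min_le_left _ _) (Real.rpow_nonneg (mul_nonneg (by linarith) hz0.le) _)
  have hAup : ∀ z ∈ Icc δ (2*δ), b (M - z) ≤ -A := by
    intro z hz
    have hz0 : 0 < z := lt_of_lt_of_le hδ0 hz.1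
    have hdu := drift_ub hβ0 hβ1 hθ hμ0 hμ1 hz0 (le_trans hz.2 hδ4)
    have h1 : A ≤ (θ*(1-μ)/2) * ((1-β)*z) ^ (-ρ) := by
      refine le_trans (hcomp z hz) ?_
      exact mul_le_mul_of_nonneg_right (min_le_right _ _) (Real.rpow_nonneg (mul_nonneg (by linarith) hz0.le) _)
    have : b (M - z) ≤ -((θ*(1-μ)/2) * ((1-β)*z) ^ (-ρ)) := hdu
    linarith
  -- clamped drift
  set bt : ℝ → ℝ := btfun β θ μ δ (M - δ) with hbtdef
  obtain ⟨L, hL0, hLip⟩ := bt_lip hβ0 hβ1 hθ hμ0 hμ1 hδ0 (by linarith : M - δ < F1 β 1)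
    (by linarith : δ ≤ M - δ)
  have hbtc : Continuous bt := by
    refine LipschitzWith.continuous (K := Real.toNNReal L) (LipschitzWith.of_dist_le_mul ?_)
    intro u v
    rw [Real.dist_eq, Real.dist_eq, Real.coe_toNNReal _ hL0]
    exact hLip u v
  have hbt_eq : ∀ z, δ ≤ z → z ≤ M - δ → bt z = b z := by
    intro z h1 h2
    rw [hbtdef, hbdef]
    unfold btfun
    rw [clampF_eq h1 h2]
  -- the fixed point space
  haveI : CompactSpace (Icc (0:ℝ) T) := isCompact_iff_compactSpace.mp isCompact_Icc
  haveI : Nonempty (Icc (0:ℝ) T) := ⟨⟨0, le_refl 0, hT.le⟩⟩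
  set X := C(Icc (0:ℝ) T, ℝ) with hXdef
  haveI : Nonempty X := ⟨⟨fun _ => (0:ℝ), continuous_const⟩⟩
  have hwc : ContinuousOn w (Icc 0 T) := holder_contOn ha0 hC
  have hgc : ContinuousOn g (Icc 0 T) := by
    rw [hgdef]; exact continuousOn_const.mul hwc
  set Φ : X → X := fun u => ⟨fun t => y₀ + (∫ s in (0:ℝ)..(t:ℝ), bt (u (projIcc 0 T hT.le s)))
      + g t, by
    have hcont : Continuous fun s : ℝ => bt (u (projIcc 0 T hT.le s)) :=
      hbtc.comp (u.continuous.comp continuous_projIcc)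
    refine Continuous.add (Continuous.add continuous_const ?_) ?_
    · exact (intervalIntegral.continuous_primitive
        (fun a b => hcont.intervalIntegrable a b) 0).comp continuous_subtype_val
    · exact hgc.restrict⟩ with hΦdef
  have hΦval : ∀ (u : X) (t : Icc (0:ℝ) T),
      Φ u t = y₀ + (∫ s in (0:ℝ)..(t:ℝ), bt (u (projIcc 0 T hT.le s))) + g t := fun u t => rfl
  -- iterate estimates
  have h0 : ∀ u v : X, ∀ t : Icc (0:ℝ) T, |u t - v t| ≤ dist u v := by
    intro u v t
    rw [← Real.dist_eq]
    exact ContinuousMap.dist_apply_le_dist t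
  have key : ∀ n : ℕ, ∀ u v : X, ∀ t : Icc (0:ℝ) T,
      |Φ^[n] u t - Φ^[n] v t| ≤ L^n * (t:ℝ)^n / n.factorial * dist u v := by
    intro n
    induction n with
    | zero => intro u v t; simpa using h0 u v t
    | succ n ih =>
      intro u v t
      rw [Function.iterate_succ_apply', Function.iterate_succ_apply']
      set P := Φ^[n] u with hPdef
      set Q := Φ^[n] v with hQdef
      have hcP : Continuous fun s : ℝ => bt (P (projIcc 0 T hT.le s)) :=
        hbtc.comp (P.continuous.comp continuous_projIcc)
      have hcQ : Continuous fun s : ℝ => bt (Q (projIcc 0 T hT.le s)) :=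
        hbtc.comp (Q.continuous.comp continuous_projIcc)
      have hsub : Φ P t - Φ Q t = ∫ s in (0:ℝ)..(t:ℝ),
          (bt (P (projIcc 0 T hT.le s)) - bt (Q (projIcc 0 T hT.le s))) := by
        rw [hΦval, hΦval, intervalIntegral.integral_sub (hcP.intervalIntegrable _ _)
          (hcQ.intervalIntegrable _ _)]
        ring
      set cst := L^(n+1) / n.factorial * dist u v with hcstdef
      have hcst0 : 0 ≤ cst := by
        rw [hcstdef]
        have : (0:ℝ) ≤ L^(n+1) := pow_nonneg hL0 _
        positivity
      have hb1 : |Φ P t - Φ Q t| ≤ ∫ s in (0:ℝ)..(t:ℝ), cst * s^n := by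
        rw [hsub]
        refine (intervalIntegral.abs_integral_le_integral_abs t.2.1).trans ?_
        refine integral_mono_on t.2.1 ((hcP.sub hcQ).abs.intervalIntegrable _ _)
          ((continuous_const.mul (continuous_pow n)).intervalIntegrable _ _) ?_
        intro s hs
        have hsT : s ∈ Icc (0:ℝ) T := ⟨hs.1, hs.2.trans t.2.2⟩
        have hproj : ((projIcc 0 T hT.le s : Icc (0:ℝ) T) : ℝ) = s := by
          rw [projIcc_of_mem hT.le hsT]
        have hih := ih u v (projIcc 0 T hT.le s)
        rw [hproj] at hih
        calc |bt (P (projIcc 0 T hT.le s)) - bt (Q (projIcc 0 T hT.le s))|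
            ≤ L * |P (projIcc 0 T hT.le s) - Q (projIcc 0 T hT.le s)| := hLip _ _
          _ ≤ L * (L^n * s^n / n.factorial * dist u v) :=
              mul_le_mul_of_nonneg_left hih hL0
          _ = cst * s^n := by rw [hcstdef]; ring
      have hcalc : ∫ s in (0:ℝ)..(t:ℝ), cst * s^n
          = L^(n+1) * (t:ℝ)^(n+1) / (n+1).factorial * dist u v := by
        rw [intervalIntegral.integral_const_mul, integral_pow]
        rw [hcstdef, Nat.factorial_succ]
        have hfac : ((n.factorial : ℝ)) ≠ 0 := by
          exact_mod_cast Nat.factorial_ne_zero n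
        have hn1 : ((n:ℝ) + 1) ≠ 0 := by positivity
        push_cast
        field_simp
        ring
      rw [← hcalc]
      exact hb1
  have hd : ∀ (Cb : ℝ), 0 ≤ Cb → ∀ u v : X, (∀ t : Icc (0:ℝ) T, |u t - v t| ≤ Cb)
      → dist u v ≤ Cb := by
    intro Cb hCb u v h
    rw [ContinuousMap.dist_le hCb]
    intro t; rw [Real.dist_eq]; exact h t
  have dn : ∀ n : ℕ, ∀ u v : X, dist (Φ^[n] u) (Φ^[n] v)
      ≤ (L*T)^n / n.factorial * dist u v := by
    intro n u v
    have hfac : (0:ℝ) < n.factorial := by exact_mod_cast Nat.factorial_pos n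
    refine hd _ ?_ _ _ fun t => (key n u v t).trans ?_
    · have : (0:ℝ) ≤ (L*T)^n := pow_nonneg (by positivity) _
      positivity
    · have h1 : L^n * (t:ℝ)^n ≤ (L*T)^n := by
        rw [mul_pow]
        exact mul_le_mul_of_nonneg_left (pow_le_pow_left₀ t.2.1 t.2.2 n) (pow_nonneg hL0 n)
      have h2 : L^n * (t:ℝ)^n / n.factorial ≤ (L*T)^n / n.factorial := by
        rw [div_eq_mul_inv, div_eq_mul_inv]
        exact mul_le_mul_of_nonneg_right h1 (inv_nonneg.mpr hfac.le)
      exact mul_le_mul_of_nonneg_right h2 dist_nonneg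
  -- contraction
  obtain ⟨n, hn⟩ : ∃ n : ℕ, (L*T)^n / n.factorial < 1 := by
    have := (FloorSemiring.tendsto_pow_div_factorial_atTop (K := ℝ) (L*T)).eventually
      (eventually_lt_nhds (by norm_num : (0:ℝ) < 1))
    exact this.exists
  have hnn : 0 ≤ (L*T)^n / n.factorial := by
    have hfac : (0:ℝ) < n.factorial := by exact_mod_cast Nat.factorial_pos n
    have : (0:ℝ) ≤ (L*T)^n := pow_nonneg (by positivity) _
    positivity
  set q : NNReal := Real.toNNReal ((L*T)^n / n.factorial) with hqdef
  have hqcoe : (q:ℝ) = (L*T)^n / n.factorial := Real.coe_toNNReal _ hnn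
  have hq1 : q < 1 := by
    rw [← NNReal.coe_lt_coe, hqcoe]; exact_mod_cast hn
  have hcontr : ContractingWith q (Φ^[n]) := by
    refine ⟨hq1, LipschitzWith.of_dist_le_mul fun u v => ?_⟩
    rw [hqcoe]
    exact dn n u v
  set x := hcontr.fixedPoint (Φ^[n]) with hxdef
  have hfixn : Φ^[n] x = x := hcontr.fixedPoint_isFixedPt
  have hfix : Φ x = x := hcontr.isFixedPt_fixedPoint_iterate
  have huniq : ∀ u : X, Φ u = u → u = x := by
    intro u hu
    have hiter : Φ^[n] u = u := Function.IsFixedPt.iterate hu n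
    have h1 := dn n u x
    rw [hiter, hfixn] at h1
    have h2 : dist u x ≤ 0 := by nlinarith [dist_nonneg (x := u) (y := x), hn]
    exact dist_le_zero.1 h2
  -- the solution
  set yT : ℝ → ℝ := fun r => x (projIcc 0 T hT.le r) with hyTdef
  have hyTc : Continuous yT := x.continuous.comp continuous_projIcc
  have heqt : ∀ t ∈ Icc (0:ℝ) T, yT t = y₀ + (∫ s in (0:ℝ)..t, bt (yT s)) + g t := by
    intro t ht
    have h1 : yT t = x ⟨t, ht⟩ := by rw [hyTdef]; simp [projIcc_of_mem hT.le ht]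
    have h2 := hΦval x ⟨t, ht⟩
    rw [hfix] at h2
    rw [h1, h2]
  have hbiT : IntervalIntegrable (fun s => bt (yT s)) volume 0 T :=
    (hbtc.comp hyTc).intervalIntegrable _ _
  -- lower barrier
  have ylow : ∀ t ∈ Icc (0:ℝ) T, δ < yT t := by
    refine barrier hT hyTc.continuousOn hbiT heqt hg0 hgH hδ0 hδ1 ?_ hcrit
    intro z hz
    rw [hbt_eq z hz.1 (by linarith [hz.2] : z ≤ M - δ)]
    exact hAlow z hz
  -- upper barrier (reflected)
  have yhigh : ∀ t ∈ Icc (0:ℝ) T, δ < M - yT t := by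
    have hfun : (fun s => (fun z => -(bt (M - z))) ((fun r => M - yT r) s))
        = fun s => -(bt (yT s)) := by
      funext s; simp
    refine barrier (b := fun z => -(bt (M - z))) (g := fun r => -(g r))
      (y := fun r => M - yT r) (y₀ := M - y₀) hT
      (continuousOn_const.sub hyTc.continuousOn) ?_ ?_ (by simp [hg0]) ?_ hδ0 hδ2 ?_ hcrit
    · rw [hfun]
      exact hbiT.neg
    · intro t ht
      rw [hfun]
      rw [intervalIntegral.integral_neg]
      beta_reduce
      have := heqt t ht
      linarith
    · intro s hs t ht
      have := hgH s hs t ht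
      calc |(-(g t)) - (-(g s))| = |g t - g s| := by rw [abs_sub_comm]; congr 1; ring
        _ ≤ K * |t - s| ^ aa := this
    · intro z hz
      show A ≤ -(bt (M - z))
      have hbz : bt (M - z) = b (M - z) := by
        refine hbt_eq _ (by linarith [hz.2] : δ ≤ M - z) (by linarith [hz.1] : M - z ≤ M - δ)
      rw [hbz]
      have := hAup z hz
      linarith
  have hmemT : ∀ t ∈ Icc (0:ℝ) T, yT t ∈ Ioo 0 M := by
    intro t ht
    exact ⟨lt_trans hδ0 (ylow t ht), by linarith [yhigh t ht]⟩
  -- yT satisfies the true (unclamped) equation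
  have hbteq : ∀ t ∈ Icc (0:ℝ) T, (∫ s in (0:ℝ)..t, bt (yT s)) = ∫ s in (0:ℝ)..t, b (yT s) := by
    intro t ht
    refine intervalIntegral.integral_congr ?_
    intro s hs
    rw [uIcc_of_le ht.1] at hs
    have hsT : s ∈ Icc (0:ℝ) T := ⟨hs.1, hs.2.trans ht.2⟩
    exact hbt_eq _ (ylow s hsT).le (by linarith [yhigh s hsT])
  have heqb : ∀ t ∈ Icc (0:ℝ) T, yT t = y₀ + (∫ s in (0:ℝ)..t, b (yT s)) + g t := by
    intro t ht
    rw [← hbteq t ht]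
    exact heqt t ht
  -- uniqueness
  refine ⟨yT, ⟨hyTc.continuousOn, hmemT, heqb⟩, ?_⟩
  rintro y' ⟨hy'c, hy'mem, hy'eq⟩
  -- barrier bounds for y'
  have hbcont : ContinuousOn (fun s => b (y' s)) (Icc 0 T) := by
    refine (b_contOn hβ0 hβ1 hθ hμ0 hμ1).comp hy'c ?_
    intro s hs
    exact hy'mem s hs
  have hbiy' : IntervalIntegrable (fun s => b (y' s)) volume 0 T := by
    apply ContinuousOn.intervalIntegrable
    rw [uIcc_of_le hT.le]
    exact hbcont
  have y'low : ∀ t ∈ Icc (0:ℝ) T, δ < y' t :=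
    barrier hT hy'c hbiy' hy'eq hg0 hgH hδ0 hδ1 hAlow hcrit
  have y'high : ∀ t ∈ Icc (0:ℝ) T, δ < M - y' t := by
    have hfun : (fun s => (fun z => -(b (M - z))) ((fun r => M - y' r) s))
        = fun s => -(b (y' s)) := by
      funext s; simp
    refine barrier (b := fun z => -(b (M - z))) (g := fun r => -(g r))
      (y := fun r => M - y' r) (y₀ := M - y₀) hT
      (continuousOn_const.sub hy'c) ?_ ?_ (by simp [hg0]) ?_ hδ0 hδ2 ?_ hcrit
    · rw [hfun]
      exact hbiy'.neg
    · intro t ht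
      rw [hfun]
      rw [intervalIntegral.integral_neg]
      beta_reduce
      have heqb' : y' t = y₀ + (∫ s in (0:ℝ)..t, b (y' s)) + g t := hy'eq t ht
      linarith
    · intro s hs t ht
      have := hgH s hs t ht
      calc |(-(g t)) - (-(g s))| = |g t - g s| := by rw [abs_sub_comm]; congr 1; ring
        _ ≤ K * |t - s| ^ aa := this
    · intro z hz
      show A ≤ -(b (M - z))
      have := hAup z hz
      linarith
  -- y' (restricted) is a fixed point of Φ
  set u' : X := ⟨fun t => y' t, by
    exact hy'c.restrict⟩ with hu'def
  have hu'fix : Φ u' = u' := by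
    refine ContinuousMap.ext fun t => ?_
    rw [hΦval]
    have hint : (∫ s in (0:ℝ)..(t:ℝ), bt (u' (projIcc 0 T hT.le s)))
        = ∫ s in (0:ℝ)..(t:ℝ), b (y' s) := by
      refine intervalIntegral.integral_congr ?_
      intro s hs
      rw [uIcc_of_le t.2.1] at hs
      have hsT : s ∈ Icc (0:ℝ) T := ⟨hs.1, hs.2.trans t.2.2⟩
      have hproj : u' (projIcc 0 T hT.le s) = y' s := by
        rw [hu'def, projIcc_of_mem hT.le hsT]
        rfl
      show bt (u' (projIcc 0 T hT.le s)) = b (y' s)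
      rw [hproj]
      exact hbt_eq _ (y'low s hsT).le (by linarith [y'high s hsT])
    rw [hint]
    exact (hy'eq (t:ℝ) t.2).symm
  have hu'x : u' = x := huniq u' hu'fix
  intro t ht
  have h1 : y' t = u' ⟨t, ht⟩ := rfl
  have h2 : yT t = x ⟨t, ht⟩ := by rw [hyTdef]; simp [projIcc_of_mem hT.le ht]
  rw [h1, h2, hu'x]

theorem stmt9 (α β θ μ γ : ℝ) (hα : α ∈ Set.Ioc (0:ℝ) 1)
    (hβ : β ∈ Set.Ioo (1 - α) 1) (hθ : 0 < θ) (hμ : μ ∈ Set.Ioo (0:ℝ) 1)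
    (w : ℝ → ℝ) (hw0 : w 0 = 0)
    (hw : ∀ T > (0:ℝ), ∃ C : ℝ, ∀ s ∈ Set.Icc (0:ℝ) T, ∀ t ∈ Set.Icc (0:ℝ) T,
      |w t - w s| ≤ C * |t - s| ^ α)
    (y₀ : ℝ) (hy₀ : y₀ ∈ Set.Ioo 0 (F1 β 1)) :
    ∃ y : ℝ → ℝ,
      (ContinuousOn y (Set.Ici 0) ∧
       (∀ t ∈ Set.Ici (0:ℝ), y t ∈ Set.Ioo 0 (F1 β 1)) ∧
       (∀ t ∈ Set.Ici (0:ℝ),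
         y t = y₀ + (∫ s in (0:ℝ)..t, G β θ μ (F1inv β (y s))) + γ * θ ^ β * w t)) ∧
      ∀ y' : ℝ → ℝ,
        (ContinuousOn y' (Set.Ici 0) ∧
         (∀ t ∈ Set.Ici (0:ℝ), y' t ∈ Set.Ioo 0 (F1 β 1)) ∧
         (∀ t ∈ Set.Ici (0:ℝ),
           y' t = y₀ + (∫ s in (0:ℝ)..t, G β θ μ (F1inv β (y' s))) + γ * θ ^ β * w t)) →
        ∀ t ∈ Set.Ici (0:ℝ), y' t = y t := by
  obtain ⟨ha0, ha1⟩ := hα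
  obtain ⟨hb1, hβ1⟩ := hβ
  have hβ0 : 0 < β := by linarith
  obtain ⟨hμ0, hμ1⟩ := hμ
  have hex : ∀ n : ℕ, 0 < (n:ℝ)+1 := fun n => by positivity
  set sol : ℕ → (ℝ → ℝ) := fun n => Classical.choose
    (exun hβ0 hβ1 hθ hμ0 hμ1 ha0 ha1 hb1 hw0 hw hy₀ ((n:ℝ)+1) (hex n)) with hsoldef
  have spec : ∀ n : ℕ,
      (ContinuousOn (sol n) (Icc 0 ((n:ℝ)+1)) ∧
       (∀ t ∈ Icc (0:ℝ) ((n:ℝ)+1), sol n t ∈ Ioo 0 (F1 β 1)) ∧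
       (∀ t ∈ Icc (0:ℝ) ((n:ℝ)+1),
         sol n t = y₀ + (∫ s in (0:ℝ)..t, G β θ μ (F1inv β (sol n s))) + γ*θ^β*w t)) ∧
      ∀ y' : ℝ → ℝ,
        (ContinuousOn y' (Icc 0 ((n:ℝ)+1)) ∧ (∀ t ∈ Icc (0:ℝ) ((n:ℝ)+1), y' t ∈ Ioo 0 (F1 β 1)) ∧
         (∀ t ∈ Icc (0:ℝ) ((n:ℝ)+1),
           y' t = y₀ + (∫ s in (0:ℝ)..t, G β θ μ (F1inv β (y' s))) + γ*θ^β*w t)) →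
        ∀ t ∈ Icc (0:ℝ) ((n:ℝ)+1), y' t = sol n t := fun n => Classical.choose_spec
    (exun hβ0 hβ1 hθ hμ0 hμ1 ha0 ha1 hb1 hw0 hw hy₀ ((n:ℝ)+1) (hex n))
  have agree : ∀ n m : ℕ, n ≤ m → ∀ t ∈ Icc (0:ℝ) ((n:ℝ)+1), sol m t = sol n t := by
    intro n m hnm
    have hsub : Icc (0:ℝ) ((n:ℝ)+1) ⊆ Icc (0:ℝ) ((m:ℝ)+1) := by
      refine Icc_subset_Icc (le_refl _) ?_
      have : (n:ℝ) ≤ (m:ℝ) := by exact_mod_cast hnm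
      linarith
    refine (spec n).2 (sol m) ⟨((spec m).1.1).mono hsub, ?_, ?_⟩
    · intro t ht; exact (spec m).1.2.1 t (hsub ht)
    · intro t ht; exact (spec m).1.2.2 t (hsub ht)
  set Y : ℝ → ℝ := fun t => sol ⌊t⌋₊ t with hYdef
  have hYsol : ∀ (n : ℕ) (t : ℝ), 0 ≤ t → t ≤ (n:ℝ)+1 → Y t = sol n t := by
    intro n t ht htn
    have hfl : t < (⌊t⌋₊:ℝ)+1 := Nat.lt_floor_add_one t
    rcases le_total ⌊t⌋₊ n with h | h
    · rw [hYdef]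
      exact (agree ⌊t⌋₊ n h t ⟨ht, hfl.le⟩).symm
    · rw [hYdef]
      exact agree n ⌊t⌋₊ h t ⟨ht, htn⟩
  have hYmem : ∀ t ∈ Ici (0:ℝ), Y t ∈ Ioo 0 (F1 β 1) := by
    intro t ht
    rw [hYdef]
    exact (spec ⌊t⌋₊).1.2.1 t ⟨ht, (Nat.lt_floor_add_one t).le⟩
  have hYeq : ∀ t ∈ Ici (0:ℝ),
      Y t = y₀ + (∫ s in (0:ℝ)..t, G β θ μ (F1inv β (Y s))) + γ*θ^β*w t := by
    intro t ht
    set n := ⌊t⌋₊ with hndef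
    have htn : t ≤ (n:ℝ)+1 := (Nat.lt_floor_add_one t).le
    have h1 : Y t = sol n t := hYsol n t ht htn
    have h2 := (spec n).1.2.2 t ⟨ht, htn⟩
    have h3 : (∫ s in (0:ℝ)..t, G β θ μ (F1inv β (Y s)))
        = ∫ s in (0:ℝ)..t, G β θ μ (F1inv β (sol n s)) := by
      refine intervalIntegral.integral_congr ?_
      intro s hs
      rw [uIcc_of_le ht] at hs
      have := hYsol n s hs.1 (hs.2.trans htn)
      simp only [this]
    rw [h1, h2, h3]
  have hYcont : ContinuousOn Y (Ici 0) := by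
    intro t₀ ht₀
    set n := ⌊t₀⌋₊ with hndef
    have htn : t₀ < (n:ℝ)+1 := Nat.lt_floor_add_one t₀
    have hmem : Iio ((n:ℝ)+1) ∈ nhds t₀ := isOpen_Iio.mem_nhds htn
    rw [← continuousWithinAt_inter hmem]
    have hsub : Ici (0:ℝ) ∩ Iio ((n:ℝ)+1) ⊆ Icc (0:ℝ) ((n:ℝ)+1) :=
      fun s hs => ⟨hs.1, hs.2.le⟩
    have hcw : ContinuousWithinAt (sol n) (Ici (0:ℝ) ∩ Iio ((n:ℝ)+1)) t₀ :=
      (((spec n).1.1) t₀ ⟨ht₀, htn.le⟩).mono hsub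
    refine hcw.congr ?_ ?_
    · intro s hs
      exact hYsol n s hs.1 hs.2.le
    · exact hYsol n t₀ ht₀ htn.le
  refine ⟨Y, ⟨hYcont, hYmem, hYeq⟩, ?_⟩
  rintro y' ⟨hy'c, hy'mem, hy'eq⟩ t ht
  set n := ⌊t⌋₊ with hndef
  have htn : t ≤ (n:ℝ)+1 := (Nat.lt_floor_add_one t).le
  have hsub : Icc (0:ℝ) ((n:ℝ)+1) ⊆ Ici (0:ℝ) := fun s hs => hs.1
  have h1 := (spec n).2 y' ⟨hy'c.mono hsub, fun s hs => hy'mem s (hsub hs),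
    fun s hs => hy'eq s (hsub hs)⟩ t ⟨ht, htn⟩
  rw [h1]
  try exact (hYsol n t ht htn).symm
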